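/- Let S ⊆ ℤ² be B-stable and suppose S contains the four points (0,0), (1,0), (2,0), (0,1) of a border triangle. Then S = ℤ²: for every t ∈ ℤ and every k ∈ ℤ, the point (t, k) belongs to S. -/

import Mathlib

/-- Embed a lattice point into the plane. -/
def toR (p : ℤ × ℤ) : ℝ × ℝ := ((p.1 : ℝ), (p.2 : ℝ))

/-- Determinant of the 2×2 matrix with columns `u`, `v`. -/
def det2 (u v : ℤ × ℤ) : ℤ := u.1 * v.2 - u.2 * v.1

/-- The set of lattice points in the (closed) triangle with vertices `a b c`. -/
def triPts (a b c : ℤ × ℤ) : Set (ℤ × ℤ) :=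
  {p | toR p ∈ convexHull ℝ {toR a, toR b, toR c}}

/-- A border triangle: a lattice triangle with exactly 4 lattice points, whose
fourth point lies on the boundary (not in the interior). -/
def IsBorderTri (T : Set (ℤ × ℤ)) : Prop :=
  ∃ a b c d : ℤ × ℤ, det2 (b - a) (c - a) ≠ 0 ∧
    T = triPts a b c ∧ T = {a, b, c, d} ∧ T.ncard = 4 ∧
    toR d ∉ interior (convexHull ℝ {toR a, toR b, toR c})

/-- An internal triangle: a lattice triangle with exactly 4 lattice points, whose
fourth point lies in the interior. -/
def IsInternalTri (T : Set (ℤ × ℤ)) : Prop :=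
  ∃ a b c d : ℤ × ℤ, det2 (b - a) (c - a) ≠ 0 ∧
    T = triPts a b c ∧ T = {a, b, c, d} ∧ T.ncard = 4 ∧
    toR d ∈ interior (convexHull ℝ {toR a, toR b, toR c})

/-- `S` is B-stable: no border triangle has exactly three of its points in `S`. -/
def BStable (S : Set (ℤ × ℤ)) : Prop :=
  ∀ T, IsBorderTri T → (T ∩ S).ncard ≠ 3

/-- `S` is I-stable: no internal triangle has exactly three of its points in `S`. -/
def IStable (S : Set (ℤ × ℤ)) : Prop :=
  ∀ T, IsInternalTri T → (T ∩ S).ncard ≠ 3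

/-- Upper density of a subset of `ℤ²`. -/
noncomputable def upperDensity (S : Set (ℤ × ℤ)) : ℝ :=
  Filter.limsup (fun n : ℕ =>
    ((S ∩ Set.Icc (-(n : ℤ), -(n : ℤ)) ((n : ℤ), (n : ℤ))).ncard : ℝ) /
      (2 * (n : ℝ) + 1) ^ 2) Filter.atTop

lemma classify (a : ℤ × ℤ) (m ε : ℤ) (hε : ε = 1 ∨ ε = -1) (p : ℤ × ℤ)
    (hp : toR p ∈ convexHull ℝ {toR a, toR (a + (2,0)), toR (a + (m,ε))}) :
    p = a ∨ p = a + (1,0) ∨ p = a + (2,0) ∨ p = a + (m,ε) := by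
  rw [convexHull_insert (by simp), convexHull_pair, mem_convexJoin] at hp
  obtain ⟨u, hu, z, hz, hpz⟩ := hp
  rw [Set.mem_singleton_iff] at hu
  subst hu
  obtain ⟨b1, b2, hb1, hb2, hb, hzeq⟩ := hz
  obtain ⟨c1, c2, hc1, hc2, hc, hpeq⟩ := hpz
  subst hzeq
  have hy := congrArg Prod.snd hpeq
  have hx := congrArg Prod.fst hpeq
  simp only [toR, Prod.snd_add, Prod.smul_snd, Prod.fst_add, Prod.smul_fst, smul_eq_mul] at hy hx
  push_cast at hy hx
  have hc1' : c1 = 1 - c2 := by linarith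
  have hb1' : b1 = 1 - b2 := by linarith
  subst hc1' hb1'
  have hy' : ((p.2 - a.2 : ℤ) : ℝ) = c2 * b2 * (ε : ℝ) := by push_cast; linear_combination -hy
  have hx' : ((p.1 - a.1 : ℤ) : ℝ) = 2 * (c2 * (1 - b2)) + c2 * b2 * (m : ℝ) := by
    push_cast; linear_combination -hx
  have hg0 : (0:ℝ) ≤ c2 * b2 := mul_nonneg hc2 hb2
  have hc2' : c2 ≤ 1 := by linarith
  have hb2' : b2 ≤ 1 := by linarith
  have hg1 : c2 * b2 ≤ 1 := by nlinarith
  have key : (c2 * b2 = 0 ∧ p.2 = a.2) ∨ (c2 * b2 = 1 ∧ p.2 = a.2 + ε) := by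
    rcases hε with h | h <;> subst h
    · rw [show ((1:ℤ):ℝ) = 1 by norm_num, mul_one] at hy'
      have h0 : (0:ℤ) ≤ p.2 - a.2 := by rw [← hy'] at hg0; exact_mod_cast hg0
      have h1 : p.2 - a.2 ≤ 1 := by rw [← hy'] at hg1; exact_mod_cast hg1
      rcases (by omega : p.2 - a.2 = 0 ∨ p.2 - a.2 = 1) with h' | h'
      · exact Or.inl ⟨by rw [← hy', h']; norm_num, by omega⟩
      · exact Or.inr ⟨by rw [← hy', h']; norm_num, by omega⟩
    · have hy'' : ((a.2 - p.2 : ℤ) : ℝ) = c2 * b2 := by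
        push_cast at hy' ⊢; linarith
      have h0 : (0:ℤ) ≤ a.2 - p.2 := by rw [← hy''] at hg0; exact_mod_cast hg0
      have h1 : a.2 - p.2 ≤ 1 := by rw [← hy''] at hg1; exact_mod_cast hg1
      rcases (by omega : a.2 - p.2 = 0 ∨ a.2 - p.2 = 1) with h' | h'
      · exact Or.inl ⟨by rw [← hy'', h']; norm_num, by omega⟩
      · exact Or.inr ⟨by rw [← hy'', h']; norm_num, by omega⟩
  rcases key with ⟨hγ, hy2⟩ | ⟨hγ, hy2⟩
  · -- on the bottom edge
    rw [hγ] at hx'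
    have hs0 : (0:ℝ) ≤ c2 * (1 - b2) := mul_nonneg hc2 (by linarith)
    have hs1 : c2 * (1 - b2) ≤ 1 := by nlinarith
    have h0 : (0:ℤ) ≤ p.1 - a.1 := by
      have : (0:ℝ) ≤ ((p.1 - a.1 : ℤ):ℝ) := by rw [hx']; linarith
      exact_mod_cast this
    have h1 : p.1 - a.1 ≤ 2 := by
      have : ((p.1 - a.1 : ℤ):ℝ) ≤ 2 := by rw [hx']; linarith
      exact_mod_cast this
    rcases (by omega : p.1 = a.1 ∨ p.1 = a.1 + 1 ∨ p.1 = a.1 + 2) with h' | h' | h'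
    · exact Or.inl (Prod.ext h' hy2)
    · exact Or.inr (Or.inl (Prod.ext (by simpa using h') (by simpa using hy2)))
    · exact Or.inr (Or.inr (Or.inl (Prod.ext (by simpa using h') (by simpa using hy2))))
  · -- the apex
    have hs : c2 * (1 - b2) = 0 := by nlinarith
    rw [hs, hγ] at hx'
    have h' : p.1 = a.1 + m := by
      have : ((p.1 - a.1 : ℤ):ℝ) = (m:ℝ) := by rw [hx']; ring
      have : p.1 - a.1 = m := by exact_mod_cast this
      omega
    exact Or.inr (Or.inr (Or.inr (Prod.ext (by simpa using h') (by simpa using hy2))))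

lemma border (a : ℤ × ℤ) (m ε : ℤ) (hε : ε = 1 ∨ ε = -1) :
    IsBorderTri {a, a + (2,0), a + (m,ε), a + (1,0)} := by
  have hε0 : ε ≠ 0 := by rcases hε with h | h <;> simp [h]
  refine ⟨a, a + (2,0), a + (m,ε), a + (1,0), ?_, ?_, rfl, ?_, ?_⟩
  · simp [det2]; omega
  · -- set equality with triPts
    ext p
    simp only [triPts, Set.mem_setOf_eq, Set.mem_insert_iff, Set.mem_singleton_iff]
    constructor
    · rintro (rfl | rfl | rfl | rfl)
      · exact subset_convexHull ℝ _ (by simp)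
      · exact subset_convexHull ℝ _ (by simp)
      · exact subset_convexHull ℝ _ (by simp)
      · -- midpoint of a and a+(2,0)
        have hseg : toR (a + (1,0)) ∈ segment ℝ (toR a) (toR (a + (2,0))) := by
          refine ⟨1/2, 1/2, by norm_num, by norm_num, by norm_num, ?_⟩
          simp only [toR, Prod.fst_add, Prod.snd_add]
          ext <;> simp <;> ring
        exact (convex_convexHull ℝ _).segment_subset
          (subset_convexHull ℝ _ (by simp)) (subset_convexHull ℝ _ (by simp)) hseg
    · intro hp
      rcases classify a m ε hε p hp with h | h | h | h <;> tauto
  · -- ncard = 4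
    have d1 : a ≠ a + (2,0) := by simp [Prod.ext_iff]
    have d2 : a ≠ a + (m,ε) := by simp [Prod.ext_iff]; omega
    have d3 : a ≠ a + (1,0) := by simp [Prod.ext_iff]
    have d4 : (a + (2,0) : ℤ×ℤ) ≠ a + (m,ε) := by simp [Prod.ext_iff]; omega
    have d5 : (a + (2,0) : ℤ×ℤ) ≠ a + (1,0) := by simp [Prod.ext_iff]
    have d6 : (a + (m,ε) : ℤ×ℤ) ≠ a + (1,0) := by simp [Prod.ext_iff]; omega
    rw [Set.ncard_insert_of_notMem (by simp [d1, d2, d3]),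
        Set.ncard_insert_of_notMem (by simp [d4, d5]),
        Set.ncard_insert_of_notMem (by simp [d6]), Set.ncard_singleton]
  · -- d not in the interior
    intro hint
    have hsub : convexHull ℝ {toR a, toR (a + (2,0)), toR (a + (m,ε))} ⊆
        {w : ℝ × ℝ | (ε:ℝ) * (a.2:ℝ) ≤ (ε:ℝ) * w.2} := by
      apply convexHull_min
      · rintro w (rfl | rfl | rfl) <;>
          simp only [toR, Set.mem_setOf_eq, Prod.snd_add] <;> push_cast <;> nlinarith [sq_nonneg (ε:ℝ)]
      · exact convex_halfSpace_ge ⟨fun x y => by simp [Prod.snd_add]; ring,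
          fun c x => by simp [Prod.smul_snd]; ring⟩ _
    rw [mem_interior_iff_mem_nhds, Metric.mem_nhds_iff] at hint
    obtain ⟨δ, hδ, hball⟩ := hint
    have hq : ((toR (a + (1,0))).1, (toR (a + (1,0))).2 - (ε:ℝ) * (δ/2)) ∈
        Metric.ball (toR (a + (1,0))) δ := by
      rw [Metric.mem_ball, Prod.dist_eq]
      have hεabs : |(ε:ℝ)| = 1 := by rcases hε with h | h <;> simp [h]
      simp [Real.dist_eq, abs_mul, hεabs, abs_of_nonneg hδ.le]
      linarith
    have := hsub (hball hq)
    simp only [Set.mem_setOf_eq, toR, Prod.snd_add] at this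
    have hε2 : (ε:ℝ) * (ε:ℝ) = 1 := by rcases hε with h | h <;> norm_num [h]
    push_cast at this
    nlinarith

lemma fill {S : Set (ℤ × ℤ)} (hS : BStable S) {T : Set (ℤ × ℤ)} (hT : IsBorderTri T)
    {w : ℤ × ℤ} (hw : w ∈ T) (hrest : ∀ x ∈ T, x ≠ w → x ∈ S) : w ∈ S := by
  by_contra hws
  obtain ⟨a, b, c, d, hdet, htp, hTe, hcard, hbd⟩ := hT
  have hfin : T.Finite := by rw [hTe]; exact Set.toFinite _
  have hint : T ∩ S = T \ {w} := by
    ext x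
    constructor
    · rintro ⟨hx, hxs⟩
      exact ⟨hx, by rintro rfl; exact hws hxs⟩
    · rintro ⟨hx, hxw⟩
      exact ⟨hx, hrest x hx (by simpa using hxw)⟩
  have : (T ∩ S).ncard = 3 := by
    rw [hint, Set.ncard_diff_singleton_of_mem hw, hcard]
  exact hS T ⟨a, b, c, d, hdet, htp, hTe, hcard, hbd⟩ this

-- helper: three-in-implies-fourth, all variants needed
lemma quadA {S : Set (ℤ × ℤ)} (hS : BStable S) (a : ℤ × ℤ) (m ε : ℤ) (hε : ε = 1 ∨ ε = -1)
    (h1 : a ∈ S) (h2 : a + (1,0) ∈ S) (h3 : a + (2,0) ∈ S) : a + (m,ε) ∈ S := by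
  refine fill hS (border a m ε hε) (by simp) ?_
  rintro x (rfl | rfl | rfl | rfl) hne <;> first | assumption | exact absurd rfl hne

lemma quadB {S : Set (ℤ × ℤ)} (hS : BStable S) (a : ℤ × ℤ) (m ε : ℤ) (hε : ε = 1 ∨ ε = -1)
    (h1 : a ∈ S) (h2 : a + (1,0) ∈ S) (h3 : a + (m,ε) ∈ S) : a + (2,0) ∈ S := by
  refine fill hS (border a m ε hε) (by simp) ?_
  rintro x (rfl | rfl | rfl | rfl) hne <;> first | assumption | exact absurd rfl hne

lemma quadC {S : Set (ℤ × ℤ)} (hS : BStable S) (a : ℤ × ℤ) (m ε : ℤ) (hε : ε = 1 ∨ ε = -1)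
    (h1 : a + (1,0) ∈ S) (h2 : a + (2,0) ∈ S) (h3 : a + (m,ε) ∈ S) : a ∈ S := by
  refine fill hS (border a m ε hε) (by simp) ?_
  rintro x (rfl | rfl | rfl | rfl) hne <;> first | assumption | exact absurd rfl hne


theorem stmt8 (S : Set (ℤ × ℤ)) (hS : BStable S)
    (h0 : ((0 : ℤ), (0 : ℤ)) ∈ S) (h1 : ((1 : ℤ), (0 : ℤ)) ∈ S)
    (h2 : ((2 : ℤ), (0 : ℤ)) ∈ S) (h3 : ((0 : ℤ), (1 : ℤ)) ∈ S) :
    ∀ t k : ℤ, (t, k) ∈ S := by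
  have row0 : ∀ t : ℤ, (t, (0:ℤ)) ∈ S := by
    have key : ∀ t : ℤ, (t, (0:ℤ)) ∈ S ∧ (t + 1, (0:ℤ)) ∈ S := by
      intro t
      induction t using Int.induction_on with
      | zero => exact ⟨h0, by simpa using h1⟩
      | succ i ih =>
        refine ⟨ih.2, ?_⟩
        have := quadB hS ((i:ℤ), 0) (-(i:ℤ)) 1 (Or.inl rfl)
          (by simpa using ih.1) (by simpa using ih.2) (by simpa using h3)
        simpa [add_assoc, one_add_one_eq_two] using this
      | pred i ih =>
        have h2' : ((-(i:ℤ) - 1 + 2), (0:ℤ)) ∈ S := by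
          rw [show -(i:ℤ) - 1 + 2 = -(i:ℤ) + 1 by ring]; exact ih.2
        have : ((-(i:ℤ) - 1), (0:ℤ)) ∈ S := by
          have := quadC hS ((-(i:ℤ) - 1), 0) ((i:ℤ) + 1) 1 (Or.inl rfl)
            (by simpa using ih.1) (by simpa using h2') (by simpa using h3)
          simpa using this
        exact ⟨this, by simpa using ih.1⟩
    exact fun t => (key t).1
  intro t k
  induction k using Int.induction_on generalizing t with
  | zero => exact row0 t
  | succ i ih =>
    have := quadA hS (t, (i:ℤ)) 0 1 (Or.inl rfl)
      (ih t) (by simpa using ih (t+1)) (by simpa using ih (t+2))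
    simpa using this
  | pred i ih =>
    have := quadA hS (t, (-(i:ℤ))) 0 (-1) (Or.inr rfl)
      (ih t) (by simpa using ih (t+1)) (by simpa using ih (t+2))
    simpa [sub_eq_add_neg] using this
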